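/- If a unitary U ∈ SU(2) satisfies |⟨Ψ00|U⊗U|Ψ⟩|² = 1, then |⟨Ψ01|U⊗U|Ψ⟩|² = 0; conversely if |⟨Ψ01|U⊗U|Ψ⟩|² = 1/2, then |⟨Ψ00|U⊗U|Ψ⟩|² = 0. -/

import Mathlib

/-- The maximally entangled state |Ψ⟩ = (|00⟩ + i|11⟩)/√2 as amplitudes. -/
noncomputable def PsiState : Fin 2 → Fin 2 → ℂ := fun k l =>
  if k = 0 ∧ l = 0 then ((Real.sqrt 2)⁻¹ : ℝ)
  else if k = 1 ∧ l = 1 then Complex.I * ((Real.sqrt 2)⁻¹ : ℝ)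
  else 0

/-- The EWL strategy U(θ,α,β). -/
noncomputable def EWLU (θ α β : ℝ) : Matrix (Fin 2) (Fin 2) ℂ :=
  !![Complex.exp (Complex.I * α) * Real.cos (θ/2),
     Complex.I * Complex.exp (Complex.I * β) * Real.sin (θ/2);
     Complex.I * Complex.exp (-(Complex.I * β)) * Real.sin (θ/2),
     Complex.exp (-(Complex.I * α)) * Real.cos (θ/2)]

/-- Action of A ⊗ B on a two-qubit state. -/
noncomputable def tensorApply (A B : Matrix (Fin 2) (Fin 2) ℂ)
    (ψ : Fin 2 → Fin 2 → ℂ) : Fin 2 → Fin 2 → ℂ :=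
  fun k l => ∑ k' : Fin 2, ∑ l' : Fin 2, A k k' * B l l' * ψ k' l'

/-- Inner product ⟨φ|ψ⟩ on ℂ²⊗ℂ². -/
noncomputable def inner2 (φ ψ : Fin 2 → Fin 2 → ℂ) : ℂ :=
  ∑ k : Fin 2, ∑ l : Fin 2, (starRingEnd ℂ) (φ k l) * ψ k l

/-- C₀ = I, C₁ = [[0,i],[i,0]]. -/
noncomputable def Cop : Fin 2 → Matrix (Fin 2) (Fin 2) ℂ := fun k =>
  if k = 0 then 1 else !![0, Complex.I; Complex.I, 0]

/-- The basis states |Ψ_kl⟩ = (C_k ⊗ C_l)|Ψ⟩. -/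
noncomputable def PsiBasis (k l : Fin 2) : Fin 2 → Fin 2 → ℂ :=
  tensorApply (Cop k) (Cop l) PsiState

lemma inner00_eq (M : Matrix (Fin 2) (Fin 2) ℂ) :
    inner2 (PsiBasis 0 0) (tensorApply M M PsiState)
    = (((Real.sqrt 2:ℝ):ℂ))⁻¹^2 * ((M 0 0)^2 + Complex.I * (M 0 1)^2
        - Complex.I * (M 1 0)^2 + (M 1 1)^2) := by
  simp [inner2, PsiBasis, tensorApply, PsiState, Cop, Fin.sum_univ_two, Matrix.one_apply]
  linear_combination (-(((Real.sqrt 2:ℝ):ℂ))⁻¹^2 * (M 1 1)^2) * Complex.I_sq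

lemma inner01_eq (M : Matrix (Fin 2) (Fin 2) ℂ) :
    inner2 (PsiBasis 0 1) (tensorApply M M PsiState)
    = (((Real.sqrt 2:ℝ):ℂ))⁻¹^2 * (-(1+Complex.I)) * (M 0 0 * M 1 0 + Complex.I * M 0 1 * M 1 1) := by
  simp [inner2, PsiBasis, tensorApply, PsiState, Cop, Fin.sum_univ_two, Matrix.one_apply]
  linear_combination (Complex.I * (((Real.sqrt 2:ℝ):ℂ))⁻¹^2 * M 0 1 * M 1 1 + (((Real.sqrt 2:ℝ):ℂ))⁻¹^2 * M 0 0 * M 1 0) * Complex.I_sq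

lemma ewl_key (p q r s : ℝ) (hn : p^2+q^2+r^2+s^2 = 1) :
    ((p^2-q^2-2*r*s)^2 = 1 → (p*r+p*s+q*s-q*r)^2 = 0) ∧
    ((p*r+p*s+q*s-q*r)^2 = 1/2 → (p^2-q^2-2*r*s)^2 = 0) := by
  have hid : (p^2-q^2-2*r*s)^2 + 2*(p*r+p*s+q*s-q*r)^2 + (2*p*q+r^2-s^2)^2
      = (p^2+q^2+r^2+s^2)^2 := by ring
  constructor
  · intro hX
    nlinarith [sq_nonneg (2*p*q+r^2-s^2), sq_nonneg (p*r+p*s+q*s-q*r)]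
  · intro hZ
    nlinarith [sq_nonneg (2*p*q+r^2-s^2), sq_nonneg (p^2-q^2-2*r*s)]

theorem stmt_13 (U : Matrix.specialUnitaryGroup (Fin 2) ℂ) :
    (norm (inner2 (PsiBasis 0 0)
        (tensorApply (U : Matrix (Fin 2) (Fin 2) ℂ) (U : Matrix (Fin 2) (Fin 2) ℂ)
          PsiState)) ^ 2 = 1 →
      norm (inner2 (PsiBasis 0 1)
        (tensorApply (U : Matrix (Fin 2) (Fin 2) ℂ) (U : Matrix (Fin 2) (Fin 2) ℂ)
          PsiState)) ^ 2 = 0) ∧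
    (norm (inner2 (PsiBasis 0 1)
        (tensorApply (U : Matrix (Fin 2) (Fin 2) ℂ) (U : Matrix (Fin 2) (Fin 2) ℂ)
          PsiState)) ^ 2 = 1/2 →
      norm (inner2 (PsiBasis 0 0)
        (tensorApply (U : Matrix (Fin 2) (Fin 2) ℂ) (U : Matrix (Fin 2) (Fin 2) ℂ)
          PsiState)) ^ 2 = 0) := by
  set M := (U : Matrix (Fin 2) (Fin 2) ℂ) with hM
  have hmem := U.2
  rw [Matrix.mem_specialUnitaryGroup_iff] at hmem
  obtain ⟨hu, hdet⟩ := hmem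
  rw [Matrix.mem_unitaryGroup_iff] at hu
  have hadj : star M = Matrix.adjugate M := by
    have h1 : M * Matrix.adjugate M = 1 := by
      rw [Matrix.mul_adjugate, hdet, one_smul]
    calc star M = star M * (M * Matrix.adjugate M) := by rw [h1, mul_one]
      _ = (star M * M) * Matrix.adjugate M := by rw [mul_assoc]
      _ = Matrix.adjugate M := by rw [mul_eq_one_comm.mp hu, one_mul]
  have hd : M 1 1 = (starRingEnd ℂ) (M 0 0) := by
    have := congrFun (congrFun hadj 0) 0
    simp [Matrix.adjugate_fin_two, Matrix.star_apply] at this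
    exact this.symm
  have hc : M 1 0 = -(starRingEnd ℂ) (M 0 1) := by
    have := congrFun (congrFun hadj 0) 1
    simp [Matrix.adjugate_fin_two, Matrix.star_apply] at this
    have h2 := congrArg (starRingEnd ℂ) this
    simpa using h2
  have hnorm : M 0 0 * (starRingEnd ℂ) (M 0 0) + M 0 1 * (starRingEnd ℂ) (M 0 1) = 1 := by
    have := congrFun (congrFun hu 0) 0
    simpa [Matrix.mul_apply, Fin.sum_univ_two, Matrix.star_apply, Matrix.one_apply] using this
  set p := (M 0 0).re
  set q := (M 0 0).im
  set r := (M 0 1).re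
  set s := (M 0 1).im
  have hn : p^2+q^2+r^2+s^2 = 1 := by
    have := congrArg Complex.re hnorm
    simp [Complex.mul_re, Complex.conj_re, Complex.conj_im] at this
    nlinarith [this]
  have hs2 : (((Real.sqrt 2:ℝ):ℂ))⁻¹^2 = 1/2 := by
    rw [inv_pow]
    norm_num
    rw [← Complex.ofReal_pow, Real.sq_sqrt (by norm_num : (2:ℝ) ≥ 0)]
    norm_num
  have h00 : norm (inner2 (PsiBasis 0 0) (tensorApply M M PsiState)) ^ 2
      = (p^2-q^2-2*r*s)^2 := by
    rw [inner00_eq, hs2, hd, hc]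
    rw [Complex.sq_norm, Complex.normSq_apply]
    simp [Complex.mul_re, Complex.mul_im, Complex.add_re, Complex.add_im, Complex.sub_re,
      Complex.sub_im, Complex.conj_re, Complex.conj_im, pow_two]
    ring
  have h01 : norm (inner2 (PsiBasis 0 1) (tensorApply M M PsiState)) ^ 2
      = (p*r+p*s+q*s-q*r)^2 := by
    rw [inner01_eq, hs2, hd, hc]
    rw [Complex.sq_norm, Complex.normSq_apply]
    simp [Complex.mul_re, Complex.mul_im, Complex.add_re, Complex.add_im, Complex.sub_re,
      Complex.sub_im, Complex.conj_re, Complex.conj_im, pow_two]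
    ring
  rw [h00, h01]
  exact ewl_key p q r s hn
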